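/- Suppose the sequence (x^k, λ^k) is generated by P-ALM, i.e., x^{k+1} ∈ X minimizes x ↦ θ(x) − ⟨λ^k, Ax − b⟩ + (r/2)‖A(x − x^k)‖² + (1/2)⟨x − x^k, Q(x − x^k)⟩ over X and λ^{k+1} = λ^k − r(A(2x^{k+1} − x^k) − b). Let x* ∈ X with Ax* = b be an optimal solution, i.e., (x*, λ*) ∈ M* for some λ*. Fix η > 0 and integers T > 0, κ ≥ 0, and set γ_η = sup{‖(x*, λ) − w^κ‖²_H : λ ∈ ℝᵐ, ‖λ‖ ≤ η}. Then the ergodic average x_T = (1/(T+1)) ∑_{k=κ}^{κ+T} x^{k+1} satisfies θ(x_T) − θ(x*) + η‖A x_T − b‖ ≤ γ_η / (2(T+1)). -/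

import Mathlib

open Matrix Finset

noncomputable section

/-- The bilinear form `(w₁, w₂) ↦ ⟨w₁, H w₂⟩` of the P-ALM matrix
`H = [[rAᵀA + Q, Aᵀ], [A, (1/r)I]]` on `ℝⁿ × ℝᵐ`. -/
def Hbil {n m : ℕ} (A : Matrix (Fin m) (Fin n) ℝ) (Q : Matrix (Fin n) (Fin n) ℝ) (r : ℝ)
    (w₁ w₂ : (Fin n → ℝ) × (Fin m → ℝ)) : ℝ :=
  w₁.1 ⬝ᵥ ((r • (Aᵀ * A) + Q) *ᵥ w₂.1) + w₁.1 ⬝ᵥ (Aᵀ *ᵥ w₂.2) + w₁.2 ⬝ᵥ (A *ᵥ w₂.1)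
    + 1 / r * (w₁.2 ⬝ᵥ w₂.2)

/-- The squared `H`-weighted norm `‖w‖²_H = ⟨w, Hw⟩`. -/
def HnormSq {n m : ℕ} (A : Matrix (Fin m) (Fin n) ℝ) (Q : Matrix (Fin n) (Fin n) ℝ) (r : ℝ)
    (w : (Fin n → ℝ) × (Fin m → ℝ)) : ℝ := Hbil A Q r w w

/-- The affine map `J(x, λ) = (−Aᵀλ, Ax − b)`. -/
def Jmap {n m : ℕ} (A : Matrix (Fin m) (Fin n) ℝ) (b : Fin m → ℝ)
    (w : (Fin n → ℝ) × (Fin m → ℝ)) : (Fin n → ℝ) × (Fin m → ℝ) :=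
  (-(Aᵀ *ᵥ w.2), A *ᵥ w.1 - b)

/-- The Euclidean inner product on `ℝⁿ × ℝᵐ`. -/
def pdot {n m : ℕ} (w₁ w₂ : (Fin n → ℝ) × (Fin m → ℝ)) : ℝ := w₁.1 ⬝ᵥ w₂.1 + w₁.2 ⬝ᵥ w₂.2

/-- `w* = (x*, λ*)` belongs to the solution set `M*` of `VI(θ, J, M)`, `M = X × ℝᵐ`:
`w*.1 ∈ X` and `θ(x) − θ(x*) + ⟨w − w*, J(w*)⟩ ≥ 0` for all `w ∈ M`. -/
def SolPoint {n m : ℕ} (θ : (Fin n → ℝ) → ℝ) (X : Set (Fin n → ℝ))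
    (A : Matrix (Fin m) (Fin n) ℝ) (b : Fin m → ℝ) (ws : (Fin n → ℝ) × (Fin m → ℝ)) : Prop :=
  ws.1 ∈ X ∧ ∀ w : (Fin n → ℝ) × (Fin m → ℝ), w.1 ∈ X →
    θ w.1 - θ ws.1 + pdot (w - ws) (Jmap A b ws) ≥ 0

/-- The P-ALM iteration: `x^{k+1} ∈ X` minimizes
`x ↦ θ(x) − ⟨λᵏ, Ax − b⟩ + (r/2)‖A(x − xᵏ)‖² + (1/2)⟨x − xᵏ, Q(x − xᵏ)⟩` over `X`, and
`λ^{k+1} = λᵏ − r(A(2x^{k+1} − xᵏ) − b)`. -/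
def PALM {n m : ℕ} (θ : (Fin n → ℝ) → ℝ) (X : Set (Fin n → ℝ))
    (A : Matrix (Fin m) (Fin n) ℝ) (b : Fin m → ℝ) (r : ℝ) (Q : Matrix (Fin n) (Fin n) ℝ)
    (x : ℕ → Fin n → ℝ) (lam : ℕ → Fin m → ℝ) : Prop :=
  (∀ k : ℕ, x (k + 1) ∈ X ∧ ∀ z ∈ X,
      θ (x (k + 1)) - lam k ⬝ᵥ (A *ᵥ x (k + 1) - b)
          + r / 2 * ((A *ᵥ (x (k + 1) - x k)) ⬝ᵥ (A *ᵥ (x (k + 1) - x k)))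
          + 1 / 2 * ((x (k + 1) - x k) ⬝ᵥ (Q *ᵥ (x (k + 1) - x k)))
        ≤ θ z - lam k ⬝ᵥ (A *ᵥ z - b)
          + r / 2 * ((A *ᵥ (z - x k)) ⬝ᵥ (A *ᵥ (z - x k)))
          + 1 / 2 * ((z - x k) ⬝ᵥ (Q *ᵥ (z - x k)))) ∧
  (∀ k : ℕ, lam (k + 1) = lam k - r • (A *ᵥ ((2 : ℝ) • x (k + 1) - x k) - b))

section algebra
variable {n m : ℕ} (A : Matrix (Fin m) (Fin n) ℝ) (Q : Matrix (Fin n) (Fin n) ℝ) (r : ℝ)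

lemma dot_transpose (x : Fin n → ℝ) (l : Fin m → ℝ) :
    x ⬝ᵥ (Aᵀ *ᵥ l) = (A *ᵥ x) ⬝ᵥ l := by
  rw [Matrix.dotProduct_mulVec, Matrix.vecMul_transpose, dotProduct_comm]

lemma dot_HQ (x y : Fin n → ℝ) :
    x ⬝ᵥ ((r • (Aᵀ * A) + Q) *ᵥ y) = r * ((A *ᵥ x) ⬝ᵥ (A *ᵥ y)) + x ⬝ᵥ (Q *ᵥ y) := by
  rw [Matrix.add_mulVec, dotProduct_add, Matrix.smul_mulVec, dotProduct_smul,
    ← Matrix.mulVec_mulVec, dot_transpose, smul_eq_mul]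

lemma Hbil_eq (w₁ w₂ : (Fin n → ℝ) × (Fin m → ℝ)) :
    Hbil A Q r w₁ w₂ = r * ((A *ᵥ w₁.1) ⬝ᵥ (A *ᵥ w₂.1)) + w₁.1 ⬝ᵥ (Q *ᵥ w₂.1)
      + (A *ᵥ w₁.1) ⬝ᵥ w₂.2 + w₁.2 ⬝ᵥ (A *ᵥ w₂.1) + 1 / r * (w₁.2 ⬝ᵥ w₂.2) := by
  rw [Hbil, dot_HQ, dot_transpose]

lemma dotQ_comm (hQ : Qᵀ = Q) (x y : Fin n → ℝ) : x ⬝ᵥ (Q *ᵥ y) = y ⬝ᵥ (Q *ᵥ x) := by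
  conv_lhs => rw [← hQ, dot_transpose, dotProduct_comm]

lemma Hbil_comm (hQ : Qᵀ = Q) (w₁ w₂ : (Fin n → ℝ) × (Fin m → ℝ)) :
    Hbil A Q r w₁ w₂ = Hbil A Q r w₂ w₁ := by
  rw [Hbil_eq, Hbil_eq, dotQ_comm Q hQ, dotProduct_comm (A *ᵥ w₁.1) (A *ᵥ w₂.1),
    dotProduct_comm (A *ᵥ w₁.1) w₂.2, dotProduct_comm w₁.2 (A *ᵥ w₂.1),
    dotProduct_comm w₁.2 w₂.2]
  ring

lemma Hbil_sub_left (w w' u : (Fin n → ℝ) × (Fin m → ℝ)) :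
    Hbil A Q r (w - w') u = Hbil A Q r w u - Hbil A Q r w' u := by
  simp only [Hbil_eq, Prod.fst_sub, Prod.snd_sub, Matrix.mulVec_sub, sub_dotProduct]
  ring

lemma Hbil_sub_right (w u u' : (Fin n → ℝ) × (Fin m → ℝ)) :
    Hbil A Q r w (u - u') = Hbil A Q r w u - Hbil A Q r w u' := by
  simp only [Hbil_eq, Prod.fst_sub, Prod.snd_sub, Matrix.mulVec_sub, dotProduct_sub]
  ring

lemma three_point (hQ : Qᵀ = Q) (w u v : (Fin n → ℝ) × (Fin m → ℝ)) :
    2 * Hbil A Q r (w - v) (u - v)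
      = HnormSq A Q r (w - v) - HnormSq A Q r (w - u) + HnormSq A Q r (u - v) := by
  simp only [HnormSq, Hbil_sub_left, Hbil_sub_right]
  rw [Hbil_comm A Q r hQ u w, Hbil_comm A Q r hQ v w, Hbil_comm A Q r hQ v u]
  ring

lemma HnormSq_nonneg (hr : 0 < r) (hQ : Q.PosSemidef) (w : (Fin n → ℝ) × (Fin m → ℝ)) :
    0 ≤ HnormSq A Q r w := by
  have h1 : HnormSq A Q r w
      = 1 / r * ((r • (A *ᵥ w.1) + w.2) ⬝ᵥ (r • (A *ᵥ w.1) + w.2)) + w.1 ⬝ᵥ (Q *ᵥ w.1) := by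
    rw [HnormSq, Hbil_eq]
    simp only [dotProduct_add, add_dotProduct, dotProduct_smul,
      smul_dotProduct, smul_eq_mul, dotProduct_comm w.2 (A *ᵥ w.1)]
    field_simp
    ring
  rw [h1]
  have h2 : 0 ≤ (r • (A *ᵥ w.1) + w.2) ⬝ᵥ (r • (A *ᵥ w.1) + w.2) :=
    Finset.sum_nonneg fun i _ => mul_self_nonneg _
  have h3 := hQ.dotProduct_mulVec_nonneg w.1
  rw [star_trivial] at h3
  have h4 : 0 ≤ 1 / r * ((r • (A *ᵥ w.1) + w.2) ⬝ᵥ (r • (A *ᵥ w.1) + w.2)) :=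
    mul_nonneg (by positivity) h2
  linarith

end algebra

section vi
variable {n m : ℕ} {θ : (Fin n → ℝ) → ℝ} {X : Set (Fin n → ℝ)}
  {A : Matrix (Fin m) (Fin n) ℝ} {b : Fin m → ℝ} {r : ℝ} {Q : Matrix (Fin n) (Fin n) ℝ}

lemma vi_lemma (hθ : ConvexOn ℝ Set.univ θ) (hXconvex : Convex ℝ X)
    (hr : 0 < r) (hQs : Qᵀ = Q) (hQpsd : Q.PosSemidef)
    (xk xp : Fin n → ℝ) (lk : Fin m → ℝ) (hxp : xp ∈ X)
    (hmin : ∀ z ∈ X,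
      θ xp - lk ⬝ᵥ (A *ᵥ xp - b)
          + r / 2 * ((A *ᵥ (xp - xk)) ⬝ᵥ (A *ᵥ (xp - xk)))
          + 1 / 2 * ((xp - xk) ⬝ᵥ (Q *ᵥ (xp - xk)))
        ≤ θ z - lk ⬝ᵥ (A *ᵥ z - b)
          + r / 2 * ((A *ᵥ (z - xk)) ⬝ᵥ (A *ᵥ (z - xk)))
          + 1 / 2 * ((z - xk) ⬝ᵥ (Q *ᵥ (z - xk)))) :
    ∀ z ∈ X, 0 ≤ θ z - θ xp
      + (z - xp) ⬝ᵥ (-(Aᵀ *ᵥ lk) + (r • (Aᵀ * A) + Q) *ᵥ (xp - xk)) := by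
  intro z hz
  set d := z - xp with hd
  set u := xp - xk with hu
  set gd := (z - xp) ⬝ᵥ (-(Aᵀ *ᵥ lk) + (r • (Aᵀ * A) + Q) *ᵥ (xp - xk)) with hgd
  set c := r / 2 * ((A *ᵥ d) ⬝ᵥ (A *ᵥ d)) + 1 / 2 * (d ⬝ᵥ (Q *ᵥ d)) with hc
  have h1 : 0 ≤ (A *ᵥ d) ⬝ᵥ (A *ᵥ d) := Finset.sum_nonneg fun i _ => mul_self_nonneg _
  have h2 := hQpsd.dotProduct_mulVec_nonneg d
  rw [star_trivial] at h2
  have hc0 : 0 ≤ c := by rw [hc]; nlinarith [h1, h2, hr]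
  have key : ∀ t : ℝ, 0 < t → t ≤ 1 → 0 ≤ t * (θ z - θ xp) + t * gd + t ^ 2 * c := by
    intro t ht ht1
    have hpX : xp + t • d ∈ X := by
      have heq2 : xp + t • d = (1 - t) • xp + t • z := by rw [hd]; module
      rw [heq2]
      exact hXconvex hxp hz (by linarith) (le_of_lt ht) (by ring)
    have hθp : θ (xp + t • d) ≤ (1 - t) * θ xp + t * θ z := by
      have h3 := hθ.2 (Set.mem_univ xp) (Set.mem_univ z) (by linarith : (0:ℝ) ≤ 1 - t)
        (le_of_lt ht) (by ring)
      rw [smul_eq_mul, smul_eq_mul] at h3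
      have heq : (1 - t) • xp + t • z = xp + t • d := by rw [hd]; module
      rwa [heq] at h3
    have hm := hmin (xp + t • d) hpX
    have hq : - (lk ⬝ᵥ (A *ᵥ (xp + t • d) - b))
          + r / 2 * ((A *ᵥ (xp + t • d - xk)) ⬝ᵥ (A *ᵥ (xp + t • d - xk)))
          + 1 / 2 * ((xp + t • d - xk) ⬝ᵥ (Q *ᵥ (xp + t • d - xk)))
        - (- (lk ⬝ᵥ (A *ᵥ xp - b))
          + r / 2 * ((A *ᵥ u) ⬝ᵥ (A *ᵥ u))
          + 1 / 2 * (u ⬝ᵥ (Q *ᵥ u)))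
        = t * gd + t ^ 2 * c := by
      have hre : xp + t • d - xk = u + t • d := by rw [hu]; abel
      rw [hre, hgd, hc]
      rw [dotProduct_add, dot_HQ, dotProduct_neg, dot_transpose]
      simp only [Matrix.mulVec_add, Matrix.mulVec_smul, dotProduct_add,
        add_dotProduct, dotProduct_smul, smul_dotProduct,
        dotProduct_sub, smul_eq_mul]
      rw [dotQ_comm Q hQs u d,
        dotProduct_comm (A *ᵥ u) (A *ᵥ d),
        dotProduct_comm lk (A *ᵥ d)]
      ring
    clear_value d u gd c
    linarith [hm, hθp, hq]
  by_contra hneg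
  push_neg at hneg
  set L := θ z - θ xp + gd with hL
  have hL0 : L < 0 := hneg
  have hden : 0 < 2 * c + 2 := by linarith
  set t := min 1 (-L / (2 * c + 2)) with htdef
  have hpos : 0 < -L / (2 * c + 2) := div_pos (by linarith) hden
  have ht0 : 0 < t := lt_min one_pos hpos
  have ht1 : t ≤ 1 := min_le_left _ _
  have hk := key t ht0 ht1
  have htc : t * c ≤ -L / 2 := by
    have h1' : t ≤ -L / (2 * c + 2) := min_le_right _ _
    have h2' : t * c ≤ (-L / (2 * c + 2)) * c := mul_le_mul_of_nonneg_right h1' hc0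
    have h3' : (-L / (2 * c + 2)) * c ≤ -L / 2 := by
      rw [div_mul_eq_mul_div, div_le_div_iff₀ hden two_pos]
      nlinarith
    linarith
  have h4 : 0 ≤ t * (L + t * c) := by nlinarith [hk]
  have h5 : 0 ≤ L + t * c := nonneg_of_mul_nonneg_right h4 ht0
  clear_value t L c
  linarith
end vi
section key
variable {n m : ℕ} {θ : (Fin n → ℝ) → ℝ} {X : Set (Fin n → ℝ)}
  {A : Matrix (Fin m) (Fin n) ℝ} {b : Fin m → ℝ} {r : ℝ} {Q : Matrix (Fin n) (Fin n) ℝ}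

lemma pdot_J_swap (A : Matrix (Fin m) (Fin n) ℝ) (b : Fin m → ℝ)
    (w w' : (Fin n → ℝ) × (Fin m → ℝ)) :
    pdot (w - w') (Jmap A b w') = pdot (w - w') (Jmap A b w) := by
  simp only [pdot, Jmap, Prod.fst_sub, Prod.snd_sub, dotProduct_neg,
    dotProduct_sub, sub_dotProduct, Matrix.mulVec_sub, dot_transpose]
  rw [dotProduct_comm (A *ᵥ w.1) w'.2, dotProduct_comm (A *ᵥ w'.1) w.2,
    dotProduct_comm (A *ᵥ w'.1) w'.2, dotProduct_comm (A *ᵥ w.1) w.2]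
  ring

lemma key_ineq (hr : 0 < r) (hQs : Qᵀ = Q)
    (xk xp : Fin n → ℝ) (lk lp : Fin m → ℝ)
    (hvi : ∀ z ∈ X, 0 ≤ θ z - θ xp
      + (z - xp) ⬝ᵥ (-(Aᵀ *ᵥ lk) + (r • (Aᵀ * A) + Q) *ᵥ (xp - xk)))
    (hlam : lp = lk - r • (A *ᵥ ((2 : ℝ) • xp - xk) - b))
    (hQpsd : Q.PosSemidef) :
    ∀ w : (Fin n → ℝ) × (Fin m → ℝ), w.1 ∈ X →
      θ w.1 - θ xp + pdot (w - (xp, lp)) (Jmap A b w)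
        ≥ 1 / 2 * (HnormSq A Q r (w - (xp, lp)) - HnormSq A Q r (w - (xk, lk))) := by
  intro w hw
  have hskew := pdot_J_swap A b w (xp, lp)
  have hEq : pdot (w - (xp, lp)) (Jmap A b (xp, lp))
        - Hbil A Q r (w - (xp, lp)) ((xk, lk) - (xp, lp))
      = (w.1 - xp) ⬝ᵥ (-(Aᵀ *ᵥ lk) + (r • (Aᵀ * A) + Q) *ᵥ (xp - xk)) := by
    subst hlam
    simp only [pdot, Jmap, Hbil_eq, Prod.fst_sub, Prod.snd_sub, dotProduct_neg,
      dotProduct_add, dotProduct_sub, sub_dotProduct,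
      Matrix.mulVec_sub, Matrix.mulVec_smul, dotProduct_smul, smul_dotProduct,
      smul_eq_mul, dot_transpose, dot_HQ]
    simp only [dotProduct_comm]
    field_simp
    ring_nf
  have h3p := three_point A Q r hQs w (xk, lk) (xp, lp)
  have hpos : 0 ≤ HnormSq A Q r ((xk, lk) - (xp, lp)) := HnormSq_nonneg A Q r hr hQpsd _
  have hvi' := hvi w.1 hw
  linarith [hskew, hEq, h3p, hpos, hvi']
end key

section main
variable {n m : ℕ}

lemma sum_dot {m : ℕ} (t : Finset ℕ) (f : ℕ → Fin m → ℝ) (v : Fin m → ℝ) :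
    (∑ j ∈ t, f j) ⬝ᵥ v = ∑ j ∈ t, f j ⬝ᵥ v := by
  simp only [dotProduct, Finset.sum_apply, Finset.sum_mul]
  exact Finset.sum_comm

lemma cont_dotself : Continuous fun l : Fin m → ℝ => l ⬝ᵥ l := by
  simp only [dotProduct]
  exact continuous_finset_sum _ fun i _ => (continuous_apply i).mul (continuous_apply i)

lemma ball_compact {η : ℝ} (hη : 0 < η) :
    IsCompact {l : Fin m → ℝ | Real.sqrt (l ⬝ᵥ l) ≤ η} := by
  have hset : {l : Fin m → ℝ | Real.sqrt (l ⬝ᵥ l) ≤ η}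
      = (fun l : Fin m → ℝ => l ⬝ᵥ l) ⁻¹' Set.Iic (η ^ 2) := by
    ext l
    simp only [Set.mem_setOf_eq, Set.mem_preimage, Set.mem_Iic]
    constructor
    · intro h
      have h0 : 0 ≤ l ⬝ᵥ l := Finset.sum_nonneg fun i _ => mul_self_nonneg _
      nlinarith [Real.sq_sqrt h0, Real.sqrt_nonneg (l ⬝ᵥ l)]
    · intro h
      calc Real.sqrt (l ⬝ᵥ l) ≤ Real.sqrt (η ^ 2) := Real.sqrt_le_sqrt h
        _ = η := Real.sqrt_sq hη.le
  apply Metric.isCompact_of_isClosed_isBounded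
  · rw [hset]; exact IsClosed.preimage cont_dotself isClosed_Iic
  · apply (Metric.isBounded_closedBall (x := (0 : Fin m → ℝ)) (r := η)).subset
    intro l hl
    simp only [Metric.mem_closedBall, dist_zero_right]
    rw [pi_norm_le_iff_of_nonneg hη.le]
    intro i
    have h0 : 0 ≤ l ⬝ᵥ l := Finset.sum_nonneg fun i _ => mul_self_nonneg _
    have h1 : l i * l i ≤ l ⬝ᵥ l :=
      Finset.single_le_sum (f := fun j => l j * l j) (fun j _ => mul_self_nonneg _)
        (Finset.mem_univ i)
    have h2 : Real.sqrt (l i * l i) ≤ Real.sqrt (l ⬝ᵥ l) := Real.sqrt_le_sqrt h1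
    rw [show l i * l i = (l i) ^ 2 by ring, Real.sqrt_sq_eq_abs] at h2
    exact le_trans h2 hl

lemma cont_Hnorm (A : Matrix (Fin m) (Fin n) ℝ) (Q : Matrix (Fin n) (Fin n) ℝ) (r : ℝ)
    (u c : Fin n → ℝ) (v : Fin m → ℝ) :
    Continuous fun l : Fin m → ℝ => HnormSq A Q r ((u, l) - (c, v)) := by
  simp only [HnormSq, Hbil, Prod.mk_sub_mk, Matrix.mulVec, dotProduct]
  fun_prop
end main

/-- Corollary 2.6, ergodic bound on objective gap plus feasibility. -/
theorem stmt_12 (n m : ℕ) (θ : (Fin n → ℝ) → ℝ) (hθ : ConvexOn ℝ Set.univ θ)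
    (X : Set (Fin n → ℝ)) (hXne : X.Nonempty) (hXclosed : IsClosed X) (hXconvex : Convex ℝ X)
    (A : Matrix (Fin m) (Fin n) ℝ) (b : Fin m → ℝ) (r : ℝ) (hr : 0 < r)
    (Q : Matrix (Fin n) (Fin n) ℝ) (hQ : Q.PosDef)
    (x : ℕ → Fin n → ℝ) (lam : ℕ → Fin m → ℝ) (halg : PALM θ X A b r Q x lam)
    (xs : Fin n → ℝ) (hxsX : xs ∈ X) (hxsfeas : A *ᵥ xs = b)
    (hxsopt : ∃ lams : Fin m → ℝ, SolPoint θ X A b (xs, lams))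
    (η : ℝ) (hη : 0 < η) (T : ℕ) (hT : 0 < T) (κ : ℕ)
    (γ : ℝ)
    (hγ : γ = sSup {c : ℝ | ∃ lam' : Fin m → ℝ, Real.sqrt (lam' ⬝ᵥ lam') ≤ η ∧
      c = HnormSq A Q r ((xs, lam') - (x κ, lam κ))})
    (xT : Fin n → ℝ) (hxT : xT = ((T : ℝ) + 1)⁻¹ • ∑ k ∈ Finset.range (T + 1), x (κ + k + 1)) :
    θ xT - θ xs + η * Real.sqrt ((A *ᵥ xT - b) ⬝ᵥ (A *ᵥ xT - b)) ≤
      γ / (2 * ((T : ℝ) + 1)) := by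
  obtain ⟨hmin, hlam⟩ := halg
  clear hxsopt hXne hXclosed hT

  have hQs : Qᵀ = Q := by
    have h := hQ.1
    rwa [Matrix.IsHermitian, Matrix.conjTranspose_eq_transpose_of_trivial] at h
  have hQpsd := hQ.posSemidef
  have hTpos : (0:ℝ) < (T:ℝ) + 1 := by positivity
  have hKI : ∀ k : ℕ, ∀ w : (Fin n → ℝ) × (Fin m → ℝ), w.1 ∈ X →
      θ w.1 - θ (x (k+1)) + pdot (w - (x (k+1), lam (k+1))) (Jmap A b w)
        ≥ 1 / 2 * (HnormSq A Q r (w - (x (k+1), lam (k+1)))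
          - HnormSq A Q r (w - (x k, lam k))) := fun k =>
    key_ineq hr hQs (x k) (x (k+1)) (lam k) (lam (k+1))
      (vi_lemma hθ hXconvex hr hQs hQpsd (x k) (x (k+1)) (lam k) (hmin k).1 (hmin k).2)
      (hlam k) hQpsd
  -- bound via γ
  have hγb : ∀ l' : Fin m → ℝ, Real.sqrt (l' ⬝ᵥ l') ≤ η →
      HnormSq A Q r ((xs, l') - (x κ, lam κ)) ≤ γ := by
    intro l' hl'
    have himg : {c : ℝ | ∃ lam' : Fin m → ℝ, Real.sqrt (lam' ⬝ᵥ lam') ≤ η ∧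
        c = HnormSq A Q r ((xs, lam') - (x κ, lam κ))}
        = (fun l'' : Fin m → ℝ => HnormSq A Q r ((xs, l'') - (x κ, lam κ)))
          '' {l'' : Fin m → ℝ | Real.sqrt (l'' ⬝ᵥ l'') ≤ η} := by
      ext c
      constructor
      · rintro ⟨l'', h1, h2⟩; exact ⟨l'', h1, h2.symm⟩
      · rintro ⟨l'', h1, h2⟩; exact ⟨l'', h1, h2.symm⟩
    have hbdd : BddAbove {c : ℝ | ∃ lam' : Fin m → ℝ, Real.sqrt (lam' ⬝ᵥ lam') ≤ η ∧
        c = HnormSq A Q r ((xs, lam') - (x κ, lam κ))} := by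
      rw [himg]
      exact ((ball_compact hη).image (cont_Hnorm A Q r xs (x κ) (lam κ))).bddAbove
    rw [hγ]
    exact le_csSup hbdd ⟨l', hl', rfl⟩
  -- the master inequality
  have hmaster : ∀ l' : Fin m → ℝ, Real.sqrt (l' ⬝ᵥ l') ≤ η →
      ((T:ℝ)+1) * (θ xs - θ xT) + ((T:ℝ)+1) * ((A *ᵥ xT - b) ⬝ᵥ l') ≥ -γ/2 := by
    intro l' hl'
    set w : (Fin n → ℝ) × (Fin m → ℝ) := (xs, l') with hw
    have htel : ∑ j ∈ Finset.range (T+1),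
        (HnormSq A Q r (w - (x (κ+j+1), lam (κ+j+1)))
          - HnormSq A Q r (w - (x (κ+j), lam (κ+j))))
        = HnormSq A Q r (w - (x (κ+T+1), lam (κ+T+1)))
          - HnormSq A Q r (w - (x κ, lam κ)) := by
      exact Finset.sum_range_sub (fun j => HnormSq A Q r (w - (x (κ+j), lam (κ+j)))) (T+1)
    have hsum : ∑ j ∈ Finset.range (T+1),
        (θ xs - θ (x (κ+j+1)) + pdot (w - (x (κ+j+1), lam (κ+j+1))) (Jmap A b w))
        ≥ 1/2 * (HnormSq A Q r (w - (x (κ+T+1), lam (κ+T+1)))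
          - HnormSq A Q r (w - (x κ, lam κ))) := by
      rw [← htel, Finset.mul_sum]
      apply Finset.sum_le_sum
      intro j _
      exact hKI (κ+j) w hxsX
    have hpdot : ∀ k : ℕ, pdot (w - (x k, lam k)) (Jmap A b w) = (A *ᵥ x k - b) ⬝ᵥ l' := by
      intro k
      simp only [pdot, Jmap, hw, Prod.fst_sub, Prod.snd_sub, hxsfeas, sub_self,
        dotProduct_zero, add_zero, dotProduct_neg]
      rw [dot_transpose, Matrix.mulVec_sub, sub_dotProduct, hxsfeas,
        sub_dotProduct]
      ring
    have hJen : ((T:ℝ)+1) * θ xT ≤ ∑ j ∈ Finset.range (T+1), θ (x (κ+j+1)) := by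
      have h1 : θ (∑ j ∈ Finset.range (T+1), ((T:ℝ)+1)⁻¹ • x (κ+j+1))
          ≤ ∑ j ∈ Finset.range (T+1), ((T:ℝ)+1)⁻¹ • θ (x (κ+j+1)) :=
        hθ.map_sum_le (fun i _ => by positivity)
          (by simp [Finset.sum_const, Finset.card_range]
              field_simp)
          (fun i _ => Set.mem_univ _)
      rw [← Finset.smul_sum, ← hxT] at h1
      simp only [smul_eq_mul, ← Finset.mul_sum] at h1
      rw [← mul_le_mul_iff_of_pos_left (show (0:ℝ) < ((T:ℝ)+1)⁻¹ by positivity)]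
      calc ((T:ℝ)+1)⁻¹ * (((T:ℝ)+1) * θ xT) = θ xT := by field_simp
        _ ≤ _ := h1
    have hAxT : ∑ j ∈ Finset.range (T+1), ((A *ᵥ x (κ+j+1) - b) ⬝ᵥ l')
        = ((T:ℝ)+1) * ((A *ᵥ xT - b) ⬝ᵥ l') := by
      have hA : A *ᵥ xT = ((T:ℝ)+1)⁻¹ • ∑ j ∈ Finset.range (T+1), A *ᵥ x (κ+j+1) := by
        rw [hxT, Matrix.mulVec_smul]
        congr 1
        rw [← Matrix.mulVecLin_apply, map_sum]
        simp [Matrix.mulVecLin_apply]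
      rw [hA]
      simp only [sub_dotProduct, smul_dotProduct, smul_eq_mul,
        Finset.sum_sub_distrib, Finset.sum_const, Finset.card_range]
      rw [sum_dot]
      push_cast
      field_simp
      simp [nsmul_eq_mul]
    have hend := HnormSq_nonneg A Q r hr hQpsd (w - (x (κ+T+1), lam (κ+T+1)))
    have hbd := hγb l' hl'
    have hexp : ∑ j ∈ Finset.range (T+1),
        (θ xs - θ (x (κ+j+1)) + pdot (w - (x (κ+j+1), lam (κ+j+1))) (Jmap A b w))
        = ((T:ℝ)+1) * θ xs - (∑ j ∈ Finset.range (T+1), θ (x (κ+j+1)))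
          + ((T:ℝ)+1) * ((A *ᵥ xT - b) ⬝ᵥ l') := by
      rw [← hAxT]
      simp only [Finset.sum_add_distrib, Finset.sum_sub_distrib, Finset.sum_const,
        Finset.card_range, nsmul_eq_mul]
      push_cast
      congr 1
      apply Finset.sum_congr rfl
      intro j _
      exact hpdot (κ+j+1)
    rw [hexp] at hsum
    linarith [hsum, hJen, hend, hbd]
  -- conclude
  set S := A *ᵥ xT - b with hS
  set s := Real.sqrt (S ⬝ᵥ S) with hsdef
  have hs0 : 0 ≤ s := Real.sqrt_nonneg _
  have hSS : 0 ≤ S ⬝ᵥ S := Finset.sum_nonneg fun i _ => mul_self_nonneg _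
  have hs2 : s ^ 2 = S ⬝ᵥ S := Real.sq_sqrt hSS
  rcases eq_or_lt_of_le hs0 with hseq | hspos
  · -- s = 0
    have hm := hmaster 0 (by simp [dotProduct, hη.le])
    rw [dotProduct_zero] at hm
    rw [← hseq] at *
    rw [le_div_iff₀ (by positivity)]
    linarith [hm]
  · -- s > 0
    have hl' : Real.sqrt ((-(η/s) • S) ⬝ᵥ (-(η/s) • S)) ≤ η := by
      have : (-(η/s) • S) ⬝ᵥ (-(η/s) • S) = (η/s)^2 * (S ⬝ᵥ S) := by
        simp only [smul_dotProduct, dotProduct_smul, smul_eq_mul]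
        ring
      rw [this, ← hs2]
      rw [show (η/s)^2 * s^2 = η^2 by field_simp]
      rw [Real.sqrt_sq hη.le]
    have hm := hmaster (-(η/s) • S) hl'
    have hdot : S ⬝ᵥ (-(η/s) • S) = -η * s := by
      rw [dotProduct_smul]
      rw [show S ⬝ᵥ S = s^2 from hs2.symm]
      have hsne : s ≠ 0 := hspos.ne'
      field_simp
      rw [smul_eq_mul, neg_mul, div_mul_eq_mul_div, mul_div_assoc, pow_two, mul_self_div_self]
    rw [hdot] at hm
    rw [le_div_iff₀ (by positivity)]
    nlinarith [hm, hTpos, hη.le, hs0]
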